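/- arXiv:1110.3875 — 2 statements merged into one kernel-verified Lean document; each statement's English description precedes it below -/
import Mathlib

section
/- Let n and d be integers with 0 ≤ d ≤ n and let g : F_2^n → F_2 be a Boolean function such that g(β) = 1 for every β ∈ F_2^n with n−d ≤ wt(β) ≤ n. Then g has no annihilator of algebraic degree less than or equal to d; that is, there is no nonzero Boolean function h : F_2^n → F_2 with deg(h) ≤ d and g(x)h(x) = 0 for all x ∈ F_2^n. -/
open Finset

/-- Hamming weight of a vector in `F_2^n`. -/
def wt {n : ℕ} (α : Fin n → ZMod 2) : ℕ :=
  (Finset.univ.filter fun i => α i = 1).card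

/-- `preceq β α` means `β ⪯ α`, i.e. `β i ≤ α i` coordinatewise. -/
def preceq {n : ℕ} (β α : Fin n → ZMod 2) : Prop :=
  ∀ i, β i = 1 → α i = 1

instance {n : ℕ} (β α : Fin n → ZMod 2) : Decidable (preceq β α) :=
  inferInstanceAs (Decidable (∀ i, β i = 1 → α i = 1))

/-- ANF coefficient of a Boolean function at `α` (Möbius inversion over the Boolean lattice). -/
def anf {n : ℕ} (f : (Fin n → ZMod 2) → ZMod 2) (α : Fin n → ZMod 2) : ZMod 2 :=
  ∑ β ∈ Finset.univ.filter (fun β => preceq β α), f β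

/-- Algebraic degree of a Boolean function: the largest weight of a monomial
with nonzero ANF coefficient. -/
def degB {n : ℕ} (f : (Fin n → ZMod 2) → ZMod 2) : ℕ :=
  (Finset.univ.filter fun α => anf f α ≠ 0).sup wt

/-- Algebraic immunity: minimum degree of a nonzero annihilator of `f` or of `f ⊕ 1`. -/
noncomputable def AI {n : ℕ} (f : (Fin n → ZMod 2) → ZMod 2) : ℕ :=
  sInf {d | ∃ h : (Fin n → ZMod 2) → ZMod 2, h ≠ 0 ∧ degB h = d ∧
    ((∀ x, f x * h x = 0) ∨ (∀ x, (f x + 1) * h x = 0))}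

/-- Elementary symmetric polynomial of degree `i` on `n` variables, as a Boolean function. -/
def esymB (n i : ℕ) (x : Fin n → ZMod 2) : ZMod 2 :=
  ∑ α ∈ Finset.univ.filter (fun α : Fin n → ZMod 2 => wt α = i),
    ∏ j ∈ Finset.univ.filter (fun j => α j = 1), x j

lemma zmod2_cases (x : ZMod 2) : x = 0 ∨ x = 1 := by revert x; decide

lemma count_free {n : ℕ} (p q : Fin n → Prop) [DecidablePred p] [DecidablePred q]
    (hpq : ∀ i, p i → q i → False) :
    (univ.filter fun β : Fin n → ZMod 2 => (∀ i, p i → β i = 1) ∧ (∀ i, q i → β i = 0)).card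
      = 2 ^ (univ.filter fun i => ¬ p i ∧ ¬ q i).card := by
  rw [← Fintype.card_subtype]
  have e : {β : Fin n → ZMod 2 // (∀ i, p i → β i = 1) ∧ (∀ i, q i → β i = 0)} ≃
      ({i : Fin n // ¬ p i ∧ ¬ q i} → ZMod 2) := by
    refine
      { toFun := fun β i => β.1 i.1
        invFun := fun g => ⟨fun i => if h : ¬ p i ∧ ¬ q i then g ⟨i, h⟩ else if p i then 1 else 0,
          ?_, ?_⟩
        left_inv := ?_
        right_inv := ?_ }
    · intro i hi
      simp only [dif_neg (show ¬(¬ p i ∧ ¬ q i) by tauto), if_pos hi]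
    · intro i hi
      simp only [dif_neg (show ¬(¬ p i ∧ ¬ q i) by tauto), if_neg (fun hp => hpq i hp hi)]
    · rintro ⟨β, hβ1, hβ2⟩
      ext i
      simp only
      by_cases h : ¬ p i ∧ ¬ q i
      · simp [dif_pos h]
      · rw [dif_neg h]
        by_cases hp : p i
        · rw [if_pos hp, hβ1 i hp]
        · rw [if_neg hp, hβ2 i (by tauto)]
    · intro g
      funext i
      simp only [dif_pos i.2]
  rw [Fintype.card_congr e, Fintype.card_fun]
  simp [Fintype.card_subtype]

lemma pow_two_zmod (k : ℕ) : (((2:ℕ) ^ k : ℕ) : ZMod 2) = if k = 0 then 1 else 0 := by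
  cases k with
  | zero => simp
  | succ m =>
    have h2 : ((2:ℕ) : ZMod 2) = 0 := by decide
    rw [pow_succ, Nat.cast_mul, h2, mul_zero]
    simp

lemma interval_card {n : ℕ} (u v : Fin n → ZMod 2) :
    (((univ.filter fun α => preceq u α ∧ preceq α v).card : ℕ) : ZMod 2)
      = if u = v then 1 else 0 := by
  by_cases huv : preceq u v
  · have hfc : (univ.filter fun α => preceq u α ∧ preceq α v)
        = univ.filter fun α : Fin n → ZMod 2 =>
            (∀ i, u i = 1 → α i = 1) ∧ (∀ i, v i = 0 → α i = 0) := by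
      apply filter_congr
      intro α _
      constructor
      · rintro ⟨h1, h2⟩
        refine ⟨h1, fun i hv => ?_⟩
        rcases zmod2_cases (α i) with h | h
        · exact h
        · rw [h2 i h] at hv; exact absurd hv (by decide)
      · rintro ⟨h1, h2⟩
        refine ⟨h1, fun i ha => ?_⟩
        rcases zmod2_cases (v i) with h | h
        · rw [h2 i h] at ha; exact absurd ha (by decide)
        · exact h
    rw [hfc, count_free (fun i => u i = 1) (fun i => v i = 0)
      (fun i h1 h2 => by
        have h1' : u i = 1 := h1
        have h2' : v i = 0 := h2
        rw [huv i h1'] at h2'; exact absurd h2' (by decide)),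
      pow_two_zmod]
    have hiff : ((univ.filter fun i => ¬ (fun i => u i = 1) i ∧ ¬ (fun i => v i = 0) i).card = 0)
        ↔ u = v := by
      rw [Finset.card_eq_zero, Finset.filter_eq_empty_iff]
      constructor
      · intro hall
        funext i
        have hni := hall (mem_univ i)
        rcases zmod2_cases (u i) with h | h
        · rcases zmod2_cases (v i) with h' | h'
          · rw [h, h']
          · exact absurd ⟨by simp only; rw [h]; decide, by simp only; rw [h']; decide⟩ hni
        · rw [h, huv i h]
      · intro he i _
        intro hc
        have h1 : ¬ u i = 1 := hc.1
        have h2 : ¬ v i = 0 := hc.2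
        rw [he] at h1
        rcases zmod2_cases (v i) with h | h
        · exact h2 h
        · exact h1 h
    by_cases hv : u = v
    · rw [if_pos hv, if_pos (hiff.mpr hv)]
    · rw [if_neg hv, if_neg (fun h => hv (hiff.mp h))]
  · have h0 : (univ.filter fun α => preceq u α ∧ preceq α v) = ∅ := by
      apply filter_eq_empty_iff.mpr
      rintro α _ ⟨h1, h2⟩
      exact huv (fun i hi => h2 i (h1 i hi))
    rw [h0]
    have : u ≠ v := by rintro rfl; exact huv (fun i hi => hi)
    simp [this]

lemma cover_card {n : ℕ} (u v : Fin n → ZMod 2) :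
    (((univ.filter fun β => preceq u β ∧ preceq v β).card : ℕ) : ZMod 2)
      = if (∀ i, u i = 1 ∨ v i = 1) then 1 else 0 := by
  have hfc : (univ.filter fun β => preceq u β ∧ preceq v β)
      = univ.filter fun β : Fin n → ZMod 2 =>
          (∀ i, (u i = 1 ∨ v i = 1) → β i = 1) ∧ (∀ i, False → β i = 0) := by
    apply filter_congr
    intro β _
    constructor
    · rintro ⟨h1, h2⟩
      exact ⟨fun i hi => hi.elim (h1 i) (h2 i), fun _ h => h.elim⟩
    · rintro ⟨h1, _⟩
      exact ⟨fun i hi => h1 i (Or.inl hi), fun i hi => h1 i (Or.inr hi)⟩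
  rw [hfc, count_free _ _ (fun i _ h => h), pow_two_zmod]
  have hiff : ((univ.filter fun i => ¬ (fun i => u i = 1 ∨ v i = 1) i ∧ ¬ (fun _ => False) i).card = 0)
      ↔ ∀ i, u i = 1 ∨ v i = 1 := by
    rw [Finset.card_eq_zero, Finset.filter_eq_empty_iff]
    constructor
    · intro hall i
      have hni := hall (mem_univ i)
      by_contra hc
      exact hni ⟨hc, not_false⟩
    · intro hall i _
      intro hc
      exact hc.1 (hall i)
  by_cases hv : ∀ i, u i = 1 ∨ v i = 1
  · rw [if_pos hv, if_pos (hiff.mpr hv)]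
  · rw [if_neg hv, if_neg (fun h => hv (hiff.mp h))]

def upAnf {n : ℕ} (f : (Fin n → ZMod 2) → ZMod 2) (α : Fin n → ZMod 2) : ZMod 2 :=
  ∑ β ∈ Finset.univ.filter (fun β => preceq α β), f β

lemma double_sum {n : ℕ} (f : (Fin n → ZMod 2) → ZMod 2)
    (P : (Fin n → ZMod 2) → (Fin n → ZMod 2) → Prop) (Q : (Fin n → ZMod 2) → Prop)
    [∀ a b, Decidable (P a b)] [∀ a, Decidable (Q a)] :
    (∑ α ∈ univ.filter (fun α : Fin n → ZMod 2 => Q α),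
      ∑ β ∈ univ.filter (fun β => P β α), f β)
    = ∑ β : Fin n → ZMod 2,
        (((univ.filter fun α => P β α ∧ Q α).card : ℕ) : ZMod 2) * f β := by
  rw [Finset.sum_filter]
  have step : ∀ α ∈ (univ : Finset (Fin n → ZMod 2)),
      (if Q α then (∑ β ∈ univ.filter (fun β => P β α), f β) else 0)
        = ∑ β ∈ (univ : Finset (Fin n → ZMod 2)), if P β α ∧ Q α then f β else 0 := by
    intro α _
    by_cases hq : Q α
    · rw [if_pos hq, Finset.sum_filter]
      exact Finset.sum_congr rfl (fun β _ => by simp [hq])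
    · rw [if_neg hq]
      symm
      exact Finset.sum_eq_zero (fun β _ => by simp [hq])
  rw [Finset.sum_congr rfl step, Finset.sum_comm]
  refine Finset.sum_congr rfl (fun β _ => ?_)
  rw [← Finset.sum_filter, Finset.sum_const, nsmul_eq_mul]

lemma inv1 {n : ℕ} (h : (Fin n → ZMod 2) → ZMod 2) (x : Fin n → ZMod 2) :
    (∑ α ∈ univ.filter (fun α => preceq α x), anf h α) = h x := by
  unfold anf
  rw [double_sum h (fun β α => preceq β α) (fun α => preceq α x)]
  have : ∀ β : Fin n → ZMod 2,
      (((univ.filter fun α => preceq β α ∧ preceq α x).card : ℕ) : ZMod 2) * h β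
        = (if β = x then 1 else 0) * h β := by
    intro β; rw [interval_card]
  rw [Finset.sum_congr rfl (fun β _ => this β)]
  simp [ite_mul]

lemma inv2 {n : ℕ} (h : (Fin n → ZMod 2) → ZMod 2) (x : Fin n → ZMod 2) :
    (∑ α ∈ univ.filter (fun α => preceq x α), upAnf h α) = h x := by
  unfold upAnf
  rw [double_sum h (fun β α => preceq α β) (fun α => preceq x α)]
  have : ∀ β : Fin n → ZMod 2,
      (((univ.filter fun α => preceq α β ∧ preceq x α).card : ℕ) : ZMod 2) * h β
        = (if x = β then 1 else 0) * h β := by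
    intro β
    rw [show (univ.filter fun α => preceq α β ∧ preceq x α)
        = (univ.filter fun α => preceq x α ∧ preceq α β) by
      apply filter_congr; intro α _; constructor <;> exact fun ⟨a, b⟩ => ⟨b, a⟩]
    rw [interval_card]
  rw [Finset.sum_congr rfl (fun β _ => this β)]
  simp [ite_mul]

lemma up_eq {n : ℕ} (h : (Fin n → ZMod 2) → ZMod 2) (α : Fin n → ZMod 2) :
    upAnf h α = ∑ γ : Fin n → ZMod 2,
      (if (∀ i, γ i = 1 ∨ α i = 1) then 1 else 0) * anf h γ := by
  unfold upAnf
  have : ∀ β ∈ univ.filter (fun β => preceq α β),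
      h β = ∑ γ ∈ univ.filter (fun γ => preceq γ β), anf h γ := by
    intro β _
    rw [inv1]
  rw [Finset.sum_congr rfl this,
    double_sum (anf h) (fun γ β => preceq γ β) (fun β => preceq α β)]
  refine Finset.sum_congr rfl (fun γ _ => ?_)
  rw [show (univ.filter fun β => preceq γ β ∧ preceq α β)
      = (univ.filter fun β => preceq γ β ∧ preceq α β) from rfl, cover_card]

lemma wt_mono {n : ℕ} {α β : Fin n → ZMod 2} (hp : preceq α β) : wt α ≤ wt β := by
  apply Finset.card_le_card
  intro i hi
  simp only [mem_filter, mem_univ, true_and] at *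
  exact hp i hi

lemma cover_wt {n : ℕ} {α γ : Fin n → ZMod 2} (hcov : ∀ i, γ i = 1 ∨ α i = 1) :
    n ≤ wt α + wt γ := by
  have hsub : (univ : Finset (Fin n)) ⊆
      (univ.filter fun i => α i = 1) ∪ (univ.filter fun i => γ i = 1) := by
    intro i _
    rcases hcov i with hc | hc <;> simp [mem_union, mem_filter, hc]
  calc n = (univ : Finset (Fin n)).card := by simp
    _ ≤ _ := Finset.card_le_card hsub
    _ ≤ wt α + wt γ := Finset.card_union_le _ _

theorem stmt_2 {n : ℕ} (d : ℕ) (hdn : d ≤ n)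
    (g : (Fin n → ZMod 2) → ZMod 2)
    (hg : ∀ β : Fin n → ZMod 2, n - d ≤ wt β → g β = 1) :
    ¬ ∃ h : (Fin n → ZMod 2) → ZMod 2,
        h ≠ 0 ∧ degB h ≤ d ∧ ∀ x, g x * h x = 0 := by
  rintro ⟨h, hne, hdeg, hann⟩
  have h0 : ∀ x, n - d ≤ wt x → h x = 0 := by
    intro x hx
    have := hann x
    rw [hg x hx, one_mul] at this
    exact this
  have c0 : ∀ γ, d < wt γ → anf h γ = 0 := by
    intro γ hγ
    by_contra hc
    have : wt γ ≤ degB h := Finset.le_sup (mem_filter.mpr ⟨mem_univ _, hc⟩)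
    omega
  have e0 : ∀ α, upAnf h α = 0 := by
    intro α
    by_cases hα : n - d ≤ wt α
    · unfold upAnf
      apply Finset.sum_eq_zero
      intro β hβ
      have hp : preceq α β := (mem_filter.mp hβ).2
      exact h0 β (le_trans hα (wt_mono hp))
    · rw [up_eq]
      apply Finset.sum_eq_zero
      intro γ _
      by_cases hcov : ∀ i, γ i = 1 ∨ α i = 1
      · rw [if_pos hcov]
        have hn : n ≤ wt α + wt γ := cover_wt hcov
        have : d < wt γ := by omega
        rw [c0 γ this, mul_zero]
      · rw [if_neg hcov, zero_mul]
  apply hne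
  funext x
  rw [← inv2 h x]
  exact Finset.sum_eq_zero (fun α _ => e0 α)
end

section
/- For every Boolean function f on n variables, the algebraic immunity satisfies AI(f) ≤ ⌈n/2⌉. -/
open Finset

-- auxiliary lemmas

lemma zmod2_cases_s16 : ∀ a : ZMod 2, a = 0 ∨ a = 1 := by decide
lemma zmod2_add_self : ∀ a : ZMod 2, a + a = 0 := by decide
lemma zmod2_add_one_ne : ∀ a : ZMod 2, a + 1 ≠ a := by decide
lemma zmod2_add_one_add_one : ∀ a : ZMod 2, a + 1 + 1 = a := by decide
lemma zmod2_add_one_eq_one_iff : ∀ a : ZMod 2, a + 1 = 1 ↔ ¬ a = 1 := by decide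
lemma zmod2_eq_zero_iff : ∀ a : ZMod 2, a = 0 ↔ ¬ a = 1 := by decide

def mono {n : ℕ} (α x : Fin n → ZMod 2) : ZMod 2 :=
  ∏ j ∈ Finset.univ.filter (fun j => α j = 1), x j

lemma mono_eq_ite {n : ℕ} (α x : Fin n → ZMod 2) :
    mono α x = if preceq α x then 1 else 0 := by
  unfold mono
  by_cases h : preceq α x
  · rw [if_pos h]
    apply Finset.prod_eq_one
    intro j hj
    exact h j (by simpa using hj)
  · rw [if_neg h]
    rw [preceq] at h
    push_neg at h
    obtain ⟨i, hi1, hi2⟩ := h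
    apply Finset.prod_eq_zero (i := i) (by simpa using hi1)
    rcases zmod2_cases_s16 (x i) with h0 | h1
    · exact h0
    · exact absurd h1 hi2

lemma preceq_antisymm {n : ℕ} {α β : Fin n → ZMod 2} (h1 : preceq α β) (h2 : preceq β α) :
    α = β := by
  funext i
  rcases zmod2_cases_s16 (α i) with ha | ha <;> rcases zmod2_cases_s16 (β i) with hb | hb
  · rw [ha, hb]
  · exact absurd (h2 i hb) (by rw [ha]; decide)
  · exact absurd (h1 i ha) (by rw [hb]; decide)
  · rw [ha, hb]

lemma anf_mono {n : ℕ} (α β : Fin n → ZMod 2) :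
    anf (mono α) β = if α = β then 1 else 0 := by
  unfold anf
  by_cases hab : preceq α β
  · by_cases hEq : α = β
    · subst hEq
      rw [if_pos rfl]
      have : ∀ γ ∈ Finset.univ.filter (fun γ => preceq γ α), mono α γ = if γ = α then 1 else 0 := by
        intro γ hγ
        simp only [Finset.mem_filter] at hγ
        rw [mono_eq_ite]
        by_cases h : preceq α γ
        · rw [if_pos h, if_pos (preceq_antisymm hγ.2 h)]
        · rw [if_neg h, if_neg]
          intro he; subst he; exact h (fun i hi => hi)
      rw [Finset.sum_congr rfl this, Finset.sum_ite_eq']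
      rw [if_pos (Finset.mem_filter.mpr ⟨Finset.mem_univ _, fun i hi => hi⟩)]
    · rw [if_neg hEq]
      -- find coordinate where α = 0, β = 1
      have : ∃ i, α i = 0 ∧ β i = 1 := by
        by_contra hcon
        push_neg at hcon
        apply hEq
        funext i
        rcases zmod2_cases_s16 (α i) with ha | ha
        · rcases zmod2_cases_s16 (β i) with hb | hb
          · rw [ha, hb]
          · exact absurd hb (hcon i ha)
        · rw [ha, hab i ha]
      obtain ⟨i, hai, hbi⟩ := this
      apply Finset.sum_involution (g := fun γ _ => Function.update γ i (γ i + 1))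
      · intro γ _
        have : mono α (Function.update γ i (γ i + 1)) = mono α γ := by
          unfold mono
          apply Finset.prod_congr rfl
          intro j hj
          simp only [Finset.mem_filter] at hj
          have hji : j ≠ i := by
            intro he; subst he; rw [hj.2] at hai; exact absurd hai (by decide)
          rw [Function.update_of_ne hji]
        rw [this, zmod2_add_self]
      · intro γ _ _
        intro he
        have := congrFun he i
        rw [Function.update_self] at this
        exact zmod2_add_one_ne _ this
      · intro γ _
        funext j
        by_cases hji : j = i
        · subst hji
          rw [Function.update_self, Function.update_self, zmod2_add_one_add_one]
        · simp [Function.update_of_ne hji]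
      · intro γ hγ
        simp only [Finset.mem_filter, Finset.mem_univ, true_and] at hγ ⊢
        intro j hj
        by_cases hji : j = i
        · subst hji; exact hbi
        · rw [Function.update_of_ne hji] at hj
          exact hγ j hj
  · have hne : ¬ α = β := fun he => hab (by subst he; exact fun i hi => hi)
    rw [if_neg hne]
    apply Finset.sum_eq_zero
    intro γ hγ
    simp only [Finset.mem_filter, Finset.mem_univ, true_and] at hγ
    rw [mono_eq_ite, if_neg]
    intro h
    exact hab (fun i hi => hγ i (h i hi))

lemma anf_zero {n : ℕ} (β : Fin n → ZMod 2) :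
    anf (0 : (Fin n → ZMod 2) → ZMod 2) β = 0 := by
  simp [anf]

lemma exists_ann {n : ℕ} (d : ℕ) (g : (Fin n → ZMod 2) → ZMod 2)
    (hcard : (Finset.univ.filter fun x => g x = 1).card <
      (Finset.univ.filter fun α : Fin n → ZMod 2 => wt α ≤ d).card) :
    ∃ h : (Fin n → ZMod 2) → ZMod 2, h ≠ 0 ∧ degB h ≤ d ∧ ∀ x, g x * h x = 0 := by
  classical
  set M := Finset.univ.filter fun α : Fin n → ZMod 2 => wt α ≤ d with hM
  set S := Finset.univ.filter fun x => g x = 1 with hS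
  let Φ : (↥M → ZMod 2) → (↥S → ZMod 2) := fun c x => ∑ α ∈ M.attach, c α * mono α.1 x.1
  have hni : ¬ Function.Injective Φ := by
    intro hinj
    have := Fintype.card_le_of_injective Φ hinj
    rw [Fintype.card_fun, Fintype.card_fun, Fintype.card_coe, Fintype.card_coe] at this
    have h2 : (2 : ℕ) ^ S.card < 2 ^ M.card := Nat.pow_lt_pow_right one_lt_two hcard
    simp only [ZMod.card] at this
    omega
  obtain ⟨c₁, c₂, hΦ, hne⟩ := Function.not_injective_iff.mp hni
  set c : ↥M → ZMod 2 := c₁ - c₂ with hc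
  set h : (Fin n → ZMod 2) → ZMod 2 := fun x => ∑ α ∈ M.attach, c α * mono α.1 x with hh
  have hanf : ∀ β, anf h β = ∑ α ∈ M.attach, c α * (if α.1 = β then 1 else 0) := by
    intro β
    have : anf h β = ∑ α ∈ M.attach, c α * anf (mono α.1) β := by
      unfold anf
      rw [Finset.sum_comm]
      apply Finset.sum_congr rfl
      intro α _
      rw [Finset.mul_sum]
    rw [this]
    apply Finset.sum_congr rfl
    intro α _
    rw [anf_mono]
  have hanf1 : ∀ β (hb : β ∈ M), anf h β = c ⟨β, hb⟩ := by
    intro β hb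
    rw [hanf]
    rw [Finset.sum_eq_single (⟨β, hb⟩ : ↥M)]
    · rw [if_pos rfl, mul_one]
    · intro b _ hbne
      rw [if_neg, mul_zero]
      intro he
      exact hbne (Subtype.ext he)
    · intro habs
      exact absurd (Finset.mem_attach M _) habs
  have hanf2 : ∀ β, β ∉ M → anf h β = 0 := by
    intro β hb
    rw [hanf]
    apply Finset.sum_eq_zero
    intro α _
    rw [if_neg, mul_zero]
    intro he
    exact hb (he ▸ α.2)
  refine ⟨h, ?_, ?_, ?_⟩
  · intro h0
    have hcne : c ≠ 0 := sub_ne_zero_of_ne hne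
    obtain ⟨α, hα⟩ := Function.ne_iff.mp hcne
    apply hα
    have := hanf1 α.1 α.2
    rw [h0, anf_zero] at this
    simpa using this.symm
  · apply Finset.sup_le
    intro β hβ
    simp only [Finset.mem_filter, Finset.mem_univ, true_and] at hβ
    by_contra hgt
    exact hβ (hanf2 β (by simp only [hM, Finset.mem_filter, Finset.mem_univ, true_and]; exact hgt))
  · intro x
    rcases zmod2_cases_s16 (g x) with h0 | h1
    · rw [h0, zero_mul]
    · have hxS : x ∈ S := by simp [hS, h1]
      have := congrFun hΦ ⟨x, hxS⟩
      have hx0 : h x = 0 := by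
        rw [hh]
        simp only [hc, Pi.sub_apply, sub_mul, Finset.sum_sub_distrib]
        simp only [Φ] at this
        rw [this]
        ring
      rw [hx0, mul_zero]

lemma wt_le {n : ℕ} (α : Fin n → ZMod 2) : wt α ≤ n := by
  unfold wt
  calc (Finset.univ.filter fun i => α i = 1).card ≤ (Finset.univ : Finset (Fin n)).card :=
        Finset.card_filter_le _ _
    _ = n := by simp

lemma wt_compl {n : ℕ} (α : Fin n → ZMod 2) : wt (fun i => α i + 1) = n - wt α := by
  unfold wt
  have : (Finset.univ.filter fun i => α i + 1 = 1) = (Finset.univ.filter fun i => α i = 1)ᶜ := by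
    ext i
    simp only [Finset.mem_filter, Finset.mem_univ, true_and, Finset.mem_compl,
      zmod2_add_one_eq_one_iff]
  rw [this, Finset.card_compl, Fintype.card_fin]

lemma card_wt_le {n : ℕ} :
    2 ^ n < 2 * (Finset.univ.filter fun α : Fin n → ZMod 2 => wt α ≤ (n + 1) / 2).card := by
  classical
  set d := (n + 1) / 2 with hd
  have hdn : d ≤ n := by omega
  set M := Finset.univ.filter fun α : Fin n → ZMod 2 => wt α ≤ d with hM
  set T := Finset.univ.filter fun α : Fin n → ZMod 2 => ¬ wt α ≤ d with hT
  have hsum : M.card + T.card = 2 ^ n := by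
    rw [hM, hT, Finset.card_filter_add_card_filter_not, Finset.card_univ]
    simp [Fintype.card_fun]
  -- complement map
  set compl : (Fin n → ZMod 2) → (Fin n → ZMod 2) := fun α i => α i + 1 with hcompl
  have hcinj : Function.Injective compl := by
    intro a b hab
    funext i
    have := congrFun hab i
    simp only [hcompl] at this
    have := congrArg (· + 1) this
    simpa [zmod2_add_one_add_one] using this
  -- weight-d witness
  set α₀ : Fin n → ZMod 2 := fun i => if (i : ℕ) < d then 1 else 0 with hα₀
  have hwtα₀ : wt α₀ = d := by
    unfold wt
    have h1 : (Finset.univ.filter fun i : Fin n => α₀ i = 1)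
        = (Finset.univ.filter fun i : Fin n => (i : ℕ) < d) := by
      ext i
      simp only [Finset.mem_filter, Finset.mem_univ, true_and, hα₀]
      split <;> simp_all
    rw [h1]
    have h2 : (Finset.univ.filter fun i : Fin n => (i : ℕ) < d)
        = Finset.map (Fin.castLEEmb hdn) Finset.univ := by
      ext i
      constructor
      · intro hi
        rw [Finset.mem_filter] at hi
        rw [Finset.mem_map]
        exact ⟨⟨(i : ℕ), hi.2⟩, Finset.mem_univ _, by simp [Fin.castLEEmb, Fin.castLE, Fin.ext_iff]⟩
      · intro hi
        rw [Finset.mem_map] at hi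
        obtain ⟨j, _, rfl⟩ := hi
        rw [Finset.mem_filter]
        refine ⟨Finset.mem_univ _, ?_⟩
        simpa [Fin.castLEEmb, Fin.castLE] using j.isLt
    rw [h2, Finset.card_map, Finset.card_univ, Fintype.card_fin]
  have himg : T.image compl ⊂ M := by
    constructor
    · intro β hβ
      simp only [Finset.mem_image, hT, Finset.mem_filter, Finset.mem_univ, true_and] at hβ
      obtain ⟨γ, hγ, rfl⟩ := hβ
      have h1 := wt_le γ
      have h2 : wt ((fun i => γ i + 1) : Fin n → ZMod 2) = n - wt γ := wt_compl γ
      simp only [hM, Finset.mem_filter, Finset.mem_univ, true_and]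
      show wt (compl γ) ≤ d
      rw [hcompl, h2]
      omega
    · intro hsub
      have hα₀M : α₀ ∈ M := by
        rw [hM, Finset.mem_filter]
        exact ⟨Finset.mem_univ _, le_of_eq hwtα₀⟩
      have := hsub hα₀M
      simp only [Finset.mem_image, hT, Finset.mem_filter, Finset.mem_univ, true_and] at this
      obtain ⟨γ, hγ, heq⟩ := this
      have h1 := wt_le γ
      have h2 : wt (compl γ) = n - wt γ := wt_compl γ
      have h3 : wt (compl γ) = d := by rw [heq, hwtα₀]
      omega
  have hTlt : T.card < M.card := by
    have := Finset.card_lt_card himg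
    rwa [Finset.card_image_of_injective _ hcinj] at this
  omega

theorem stmt_16 {n : ℕ} (f : (Fin n → ZMod 2) → ZMod 2) :
    AI f ≤ (n + 1) / 2 := by
  classical
  set d := (n + 1) / 2 with hd
  have hkey := card_wt_le (n := n)
  rw [← hd] at hkey
  have hsum : (Finset.univ.filter fun x => f x = 1).card
      + (Finset.univ.filter fun x => ¬ f x = 1).card = 2 ^ n := by
    rw [Finset.card_filter_add_card_filter_not, Finset.card_univ]
    simp [Fintype.card_fun]
  by_cases hc : (Finset.univ.filter fun x => f x = 1).card
      < (Finset.univ.filter fun α : Fin n → ZMod 2 => wt α ≤ d).card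
  · obtain ⟨h, h0, hdeg, hann⟩ := exists_ann d f hc
    have hmem : degB h ∈ {d | ∃ h' : (Fin n → ZMod 2) → ZMod 2, h' ≠ 0 ∧ degB h' = d ∧
        ((∀ x, f x * h' x = 0) ∨ (∀ x, (f x + 1) * h' x = 0))} :=
      ⟨h, h0, rfl, Or.inl hann⟩
    exact le_trans (Nat.sInf_le hmem) hdeg
  · have hc' : (Finset.univ.filter fun x => f x + 1 = 1).card
        < (Finset.univ.filter fun α : Fin n → ZMod 2 => wt α ≤ d).card := by
      have heq : (Finset.univ.filter fun x => f x + 1 = 1)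
          = (Finset.univ.filter fun x => ¬ f x = 1) := by
        ext x
        simp [zmod2_add_one_eq_one_iff, zmod2_eq_zero_iff]
      rw [heq]
      omega
    obtain ⟨h, h0, hdeg, hann⟩ := exists_ann d (fun x => f x + 1) hc'
    have hmem : degB h ∈ {d | ∃ h' : (Fin n → ZMod 2) → ZMod 2, h' ≠ 0 ∧ degB h' = d ∧
        ((∀ x, f x * h' x = 0) ∨ (∀ x, (f x + 1) * h' x = 0))} :=
      ⟨h, h0, rfl, Or.inr hann⟩
    exact le_trans (Nat.sInf_le hmem) hdeg
end
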